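/- Fix integers m ≥ 2 and n ≥ 1, and let μ_m denote the set of m-th roots of unity in ℂ. Let P_n be the poset (ordered by inclusion) of nonempty sets of the form {α_1·e_{i_1},…,α_k·e_{i_k}} with α_j ∈ μ_m, 1 ≤ i_1 < ⋯ < i_k ≤ n, and 1 ≤ k ≤ n-1, where e_i are the standard basis vectors of ℂ^n. Let t be the linear map of ℂ^n swapping e_{n-1} and e_n and fixing the other basis vectors. Then the subposet P_n^t of sets X ∈ P_n with t(X) = X is order-isomorphic to P_{n-1}, via X ↦ X \ ℂe_n. -/

import Mathlib

open Set

/-- The poset `P_N` of nonempty sets `{α₁·e_{i₁}, …, α_k·e_{i_k}}` in `ℂ^N`, where the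
`α_j` are `m`-th roots of unity, the indices `i_j` are pairwise distinct, and
`1 ≤ k ≤ N - 1`.  (Ordered by inclusion of sets.) -/
def monoPoset (m N : ℕ) : Set (Set (Fin N → ℂ)) :=
  {X | X.Nonempty ∧ X.Finite ∧ X.ncard ≤ N - 1 ∧
    (∀ v ∈ X, ∃ (α : ℂ) (i : Fin N), α ^ m = 1 ∧ v = α • (Pi.single i 1 : Fin N → ℂ)) ∧
    (∀ v ∈ X, ∀ w ∈ X, ∀ (α β : ℂ) (i : Fin N),
      v = α • (Pi.single i 1 : Fin N → ℂ) → w = β • (Pi.single i 1 : Fin N → ℂ) → v = w)}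

noncomputable def idx {N : ℕ} [NeZero N] (v : Fin N → ℂ) : Fin N :=
  if h : ∃ i, v i ≠ 0 then h.choose else 0

lemma smul_single_apply {N : ℕ} (α : ℂ) (i j : Fin N) :
    (α • (Pi.single i 1 : Fin N → ℂ)) j = if j = i then α else 0 := by
  simp [Pi.single_apply, mul_ite]

lemma idx_smul_single {N : ℕ} [NeZero N] {α : ℂ} (hα : α ≠ 0) (i : Fin N) :
    idx (α • (Pi.single i 1 : Fin N → ℂ)) = i := by
  have h : ∃ j, (α • (Pi.single i 1 : Fin N → ℂ)) j ≠ 0 :=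
    ⟨i, by rw [smul_single_apply, if_pos rfl]; exact hα⟩
  rw [idx, dif_pos h]
  have h2 := h.choose_spec
  rw [smul_single_apply] at h2
  by_contra hne
  rw [if_neg hne] at h2
  exact h2 rfl

lemma smul_single_ne_zero {N : ℕ} {α : ℂ} (hα : α ≠ 0) (i : Fin N) :
    α • (Pi.single i 1 : Fin N → ℂ) ≠ 0 := fun h => by
  have := congrFun h i
  rw [smul_single_apply, if_pos rfl] at this
  exact hα this

lemma root_ne_zero {m : ℕ} (hm : 1 ≤ m) {α : ℂ} (h : α ^ m = 1) : α ≠ 0 := by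
  rintro rfl
  rw [zero_pow (by omega)] at h
  exact zero_ne_one h

/-- structural characterization -/
lemma monoPoset_mem_iff {m N : ℕ} (hm : 1 ≤ m) [NeZero N] (X : Set (Fin N → ℂ)) :
    X ∈ monoPoset m N ↔ X.Nonempty ∧ X.Finite ∧ X.ncard ≤ N - 1 ∧
      (∀ v ∈ X, ∃ (α : ℂ) (i : Fin N), α ^ m = 1 ∧ v = α • (Pi.single i 1 : Fin N → ℂ)) ∧
      Set.InjOn idx X := by
  constructor
  · rintro ⟨h1, h2, h3, h4, h5⟩
    refine ⟨h1, h2, h3, h4, ?_⟩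
    intro v hv w hw hvw
    obtain ⟨α, i, hα, hvi⟩ := h4 v hv
    obtain ⟨β, j, hβ, hwj⟩ := h4 w hw
    have hα0 := root_ne_zero hm hα
    have hβ0 := root_ne_zero hm hβ
    have hij : i = j := by
      rw [hvi, hwj, idx_smul_single hα0, idx_smul_single hβ0] at hvw
      exact hvw
    exact h5 v hv w hw α β i hvi (by rw [hwj, hij])
  · rintro ⟨h1, h2, h3, h4, h5⟩
    refine ⟨h1, h2, h3, h4, ?_⟩
    intro v hv w hw α β i hvi hwi
    obtain ⟨γ, k, hγ, hvk⟩ := h4 v hv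
    obtain ⟨δ, l, hδ, hwl⟩ := h4 w hw
    have hγ0 := root_ne_zero hm hγ
    have hδ0 := root_ne_zero hm hδ
    have hα0 : α ≠ 0 := by
      rintro rfl
      rw [zero_smul] at hvi
      exact smul_single_ne_zero hγ0 k (hvk ▸ hvi)
    have hβ0 : β ≠ 0 := by
      rintro rfl
      rw [zero_smul] at hwi
      exact smul_single_ne_zero hδ0 l (hwl ▸ hwi)
    apply h5 hv hw
    rw [hvi, hwi, idx_smul_single hα0, idx_smul_single hβ0]

section Maps

variable {n : ℕ}

def idxA (hn : 2 ≤ n) : Fin n := ⟨n - 2, by omega⟩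
def idxB (hn : 2 ≤ n) : Fin n := ⟨n - 1, by omega⟩

lemma idxA_ne_idxB (hn : 2 ≤ n) : idxA hn ≠ idxB hn := by
  simp only [idxA, idxB, Fin.mk.injEq, Ne]
  omega

def tmap (hn : 2 ≤ n) (v : Fin n → ℂ) : Fin n → ℂ := v ∘ Equiv.swap (idxA hn) (idxB hn)

def rmap (hn : 2 ≤ n) (v : Fin n → ℂ) : Fin (n - 1) → ℂ := v ∘ Fin.castLE (by omega)

def emap (hn : 2 ≤ n) (w : Fin (n - 1) → ℂ) : Fin n → ℂ :=
  fun i => if h : (i : ℕ) < n - 1 then w ⟨i, h⟩ else 0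

def Lset (hn : 2 ≤ n) : Set (Fin n → ℂ) :=
  {w | ∃ c : ℂ, w = c • (Pi.single (idxB hn) 1 : Fin n → ℂ)}

def Fmap (hn : 2 ≤ n) (X : Set (Fin n → ℂ)) : Set (Fin (n - 1) → ℂ) :=
  rmap hn '' (X \ Lset hn)

def Gmap (hn : 2 ≤ n) (Y : Set (Fin (n - 1) → ℂ)) : Set (Fin n → ℂ) :=
  emap hn '' Y ∪ tmap hn '' (emap hn '' Y)

lemma tmap_smul_single (hn : 2 ≤ n) (α : ℂ) (i : Fin n) :
    tmap hn (α • (Pi.single i 1 : Fin n → ℂ)) =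
      α • (Pi.single (Equiv.swap (idxA hn) (idxB hn) i) 1 : Fin n → ℂ) := by
  funext j
  simp only [tmap, Function.comp_apply, smul_single_apply]
  congr 1
  simp only [eq_iff_iff]
  constructor
  · intro h; rw [← h, Equiv.swap_apply_self]
  · intro h; rw [h, Equiv.swap_apply_self]

lemma tmap_tmap (hn : 2 ≤ n) (v : Fin n → ℂ) : tmap hn (tmap hn v) = v := by
  funext j
  simp [tmap, Equiv.swap_apply_self]

lemma rmap_smul_single (hn : 2 ≤ n) (α : ℂ) (i : Fin n) (h : (i : ℕ) < n - 1) :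
    rmap hn (α • (Pi.single i 1 : Fin n → ℂ)) =
      α • (Pi.single (⟨i, h⟩ : Fin (n - 1)) 1 : Fin (n - 1) → ℂ) := by
  funext j
  simp only [rmap, Function.comp_apply, smul_single_apply]
  congr 1
  simp [Fin.ext_iff]

lemma emap_smul_single (hn : 2 ≤ n) (α : ℂ) (j : Fin (n - 1)) :
    emap hn (α • (Pi.single j 1 : Fin (n - 1) → ℂ)) =
      α • (Pi.single (Fin.castLE (by omega) j) 1 : Fin n → ℂ) := by
  funext i
  simp only [emap, smul_single_apply]
  by_cases h : (i : ℕ) < n - 1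
  · rw [dif_pos h]
    congr 1
    simp [Fin.ext_iff]
  · rw [dif_neg h]
    have : ¬ (i = Fin.castLE (by omega) j) := by
      simp only [Fin.ext_iff, Fin.coe_castLE]
      have := j.isLt
      omega
    rw [if_neg this]

lemma rmap_emap (hn : 2 ≤ n) (w : Fin (n - 1) → ℂ) : rmap hn (emap hn w) = w := by
  funext j
  have hj : ((Fin.castLE (by omega : n - 1 ≤ n) j : Fin n) : ℕ) < n - 1 := j.isLt
  simp only [rmap, Function.comp_apply, emap, dif_pos hj]
  congr 1

lemma castLE_ne_idxB (hn : 2 ≤ n) (j : Fin (n - 1)) :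
    Fin.castLE (by omega : n - 1 ≤ n) j ≠ idxB hn := by
  simp only [Fin.ext_iff, Fin.coe_castLE, idxB, Ne]
  have := j.isLt
  omega

lemma not_mem_Lset (hn : 2 ≤ n) {α : ℂ} (hα : α ≠ 0) {i : Fin n} (hi : i ≠ idxB hn) :
    α • (Pi.single i 1 : Fin n → ℂ) ∉ Lset hn := by
  rintro ⟨c, hc⟩
  rcases eq_or_ne c 0 with rfl | hc0
  · rw [zero_smul] at hc
    exact smul_single_ne_zero hα i hc
  · haveI : NeZero n := ⟨by omega⟩
    have := congrArg idx hc
    rw [idx_smul_single hα, idx_smul_single hc0] at this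
    exact hi this

end Maps

section Main

variable {m n : ℕ}

lemma fixed_mem (hn : 2 ≤ n) {X : Set (Fin n → ℂ)} (hfix : tmap hn '' X = X)
    {v : Fin n → ℂ} (hv : v ∈ X) : tmap hn v ∈ X := by
  rw [← hfix]; exact ⟨v, hv, rfl⟩

lemma Fmap_mem (hm : 2 ≤ m) (hn : 2 ≤ n) {X : Set (Fin n → ℂ)}
    (hX : X ∈ monoPoset m n) (hfix : tmap hn '' X = X) :
    Fmap hn X ∈ monoPoset m (n - 1) := by
  haveI : NeZero n := ⟨by omega⟩
  haveI : NeZero (n - 1) := ⟨by omega⟩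
  rw [monoPoset_mem_iff (by omega : 1 ≤ m)] at hX ⊢
  obtain ⟨hne, hfin, hcard, hform, hinj⟩ := hX
  -- normal form for elements of X \ Lset
  have key : ∀ v ∈ X \ Lset hn, ∃ (α : ℂ) (i : Fin n) (hlt : (i : ℕ) < n - 1),
      α ^ m = 1 ∧ α ≠ 0 ∧ v = α • (Pi.single i 1 : Fin n → ℂ) ∧ idx v = i := by
    rintro v ⟨hvX, hvL⟩
    obtain ⟨α, i, hα, hvi⟩ := hform v hvX
    have hα0 := root_ne_zero (by omega : 1 ≤ m) hα
    have hib : i ≠ idxB hn := by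
      rintro rfl; exact hvL ⟨α, hvi⟩
    have hlt : (i : ℕ) < n - 1 := by
      have h1 := i.isLt
      have h2 : (i : ℕ) ≠ n - 1 := fun h => hib (Fin.ext h)
      omega
    exact ⟨α, i, hlt, hα, hα0, hvi, by rw [hvi, idx_smul_single hα0]⟩
  refine ⟨?_, (hfin.diff : (X \ Lset hn).Finite).image _, ?_, ?_, ?_⟩
  · -- nonempty
    obtain ⟨v, hv⟩ := hne
    obtain ⟨α, i, hα, hvi⟩ := hform v hv
    have hα0 := root_ne_zero (by omega : 1 ≤ m) hα
    by_cases hib : i = idxB hn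
    · refine ⟨rmap hn (tmap hn v), mem_image_of_mem _ ⟨fixed_mem hn hfix hv, ?_⟩⟩
      rw [hvi, hib, tmap_smul_single, Equiv.swap_apply_right]
      exact not_mem_Lset hn hα0 (idxA_ne_idxB hn)
    · refine ⟨rmap hn v, mem_image_of_mem _ ⟨hv, ?_⟩⟩
      rw [hvi]
      exact not_mem_Lset hn hα0 hib
  · -- cardinality
    by_cases hL : (X ∩ Lset hn).Nonempty
    · obtain ⟨v, hvX, hvL⟩ := hL
      have h1 : (Fmap hn X).ncard ≤ (X \ Lset hn).ncard :=
        Set.ncard_image_le (hfin.diff : (X \ Lset hn).Finite)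
      have h2 : (X \ Lset hn).ncard ≤ (X \ {v}).ncard :=
        Set.ncard_le_ncard (diff_subset_diff_right (singleton_subset_iff.mpr hvL))
          (hfin.diff : (X \ {v}).Finite)
      have h3 : (X \ {v}).ncard < X.ncard := Set.ncard_diff_singleton_lt_of_mem hvX hfin
      omega
    · have hidx : ∀ v ∈ X, ((idx v : Fin n) : ℕ) < n - 2 := by
        intro v hv
        obtain ⟨α, i, hα, hvi⟩ := hform v hv
        have hα0 := root_ne_zero (by omega : 1 ≤ m) hα
        have hib : i ≠ idxB hn := by
          rintro rfl
          exact hL ⟨v, hv, α, hvi⟩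
        have hia : i ≠ idxA hn := by
          rintro rfl
          have hw : tmap hn v ∈ X := fixed_mem hn hfix hv
          refine hL ⟨tmap hn v, hw, α, ?_⟩
          rw [hvi, tmap_smul_single, Equiv.swap_apply_left]
        rw [hvi, idx_smul_single hα0]
        have h1 := i.isLt
        have h2 : (i : ℕ) ≠ n - 1 := fun h => hib (Fin.ext h)
        have h3 : (i : ℕ) ≠ n - 2 := fun h => hia (Fin.ext h)
        omega
      have hT : ({i : Fin n | (i : ℕ) < n - 2} : Set (Fin n)).ncard = n - 2 := by
        have hTeq : ({i : Fin n | (i : ℕ) < n - 2} : Set (Fin n)) =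
            Fin.castLE (by omega : n - 2 ≤ n) '' univ := by
          ext i
          simp only [mem_setOf_eq, mem_image, mem_univ, true_and]
          constructor
          · intro hi; exact ⟨⟨i, hi⟩, Fin.ext rfl⟩
          · rintro ⟨j, rfl⟩; exact j.isLt
        rw [hTeq, Set.ncard_image_of_injective _ (Fin.castLE_injective _), Set.ncard_univ]
        simp
      have hXcard : X.ncard ≤ n - 2 := by
        rw [← hT]
        exact Set.ncard_le_ncard_of_injOn idx hidx hinj (Set.toFinite _)
      have h1 : (Fmap hn X).ncard ≤ (X \ Lset hn).ncard :=
        Set.ncard_image_le (hfin.diff : (X \ Lset hn).Finite)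
      have h2 : (X \ Lset hn).ncard ≤ X.ncard := Set.ncard_le_ncard diff_subset hfin
      omega
  · -- form
    rintro y ⟨v, hv, rfl⟩
    obtain ⟨α, i, hlt, hα, hα0, hvi, -⟩ := key v hv
    exact ⟨α, ⟨i, hlt⟩, hα, by rw [hvi, rmap_smul_single hn α i hlt]⟩
  · -- injectivity
    rintro y1 ⟨v1, hv1, rfl⟩ y2 ⟨v2, hv2, rfl⟩ hid
    obtain ⟨α1, i1, hlt1, -, hα1, hvi1, hidx1⟩ := key v1 hv1
    obtain ⟨α2, i2, hlt2, -, hα2, hvi2, hidx2⟩ := key v2 hv2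
    rw [hvi1, rmap_smul_single hn α1 i1 hlt1] at hid
    rw [hvi2, rmap_smul_single hn α2 i2 hlt2] at hid
    rw [idx_smul_single hα1, idx_smul_single hα2] at hid
    have hi : i1 = i2 := by
      have hval := congrArg Fin.val hid
      exact Fin.ext hval
    exact congrArg _ (hinj hv1.1 hv2.1 (by rw [hidx1, hidx2, hi]))

lemma Gmap_cases (hm : 2 ≤ m) (hn : 2 ≤ n) {Y : Set (Fin (n - 1) → ℂ)}
    (hform : ∀ w ∈ Y, ∃ (α : ℂ) (j : Fin (n - 1)), α ^ m = 1 ∧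
      w = α • (Pi.single j 1 : Fin (n - 1) → ℂ))
    {u : Fin n → ℂ} (hu : u ∈ Gmap hn Y) :
    (∃ (α : ℂ) (j : Fin (n - 1)), α ^ m = 1 ∧
      α • (Pi.single j 1 : Fin (n - 1) → ℂ) ∈ Y ∧
      u = α • (Pi.single (Fin.castLE (Nat.sub_le n 1) j) 1 : Fin n → ℂ)) ∨
    (∃ α : ℂ, α ^ m = 1 ∧
      α • (Pi.single (⟨n - 2, by omega⟩ : Fin (n - 1)) 1 : Fin (n - 1) → ℂ) ∈ Y ∧
      u = α • (Pi.single (idxB hn) 1 : Fin n → ℂ)) := by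
  rcases hu with ⟨w, hw, rfl⟩ | ⟨u', ⟨w, hw, rfl⟩, rfl⟩
  · obtain ⟨α, j, hα, hwj⟩ := hform w hw
    rw [hwj] at hw ⊢
    exact Or.inl ⟨α, j, hα, hw, emap_smul_single hn α j⟩
  · obtain ⟨α, j, hα, hwj⟩ := hform w hw
    rw [hwj] at hw ⊢
    rw [emap_smul_single hn α j, tmap_smul_single]
    by_cases hA : Fin.castLE (by omega : n - 1 ≤ n) j = idxA hn
    · have hj : j = (⟨n - 2, by omega⟩ : Fin (n - 1)) := by
        apply Fin.ext
        have := congrArg Fin.val hA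
        simpa [idxA] using this
      rw [hA, Equiv.swap_apply_left]
      exact Or.inr ⟨α, hα, hj ▸ hw, rfl⟩
    · rw [Equiv.swap_apply_of_ne_of_ne hA (castLE_ne_idxB hn j)]
      exact Or.inl ⟨α, j, hα, hw, rfl⟩

lemma Gmap_mono (hn : 2 ≤ n) {Y Y' : Set (Fin (n - 1) → ℂ)} (h : Y ⊆ Y') :
    Gmap hn Y ⊆ Gmap hn Y' :=
  union_subset_union (image_mono h) (image_mono (image_mono h))

lemma Gmap_mem (hm : 2 ≤ m) (hn : 2 ≤ n) {Y : Set (Fin (n - 1) → ℂ)}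
    (hY : Y ∈ monoPoset m (n - 1)) :
    Gmap hn Y ∈ monoPoset m n ∧ tmap hn '' Gmap hn Y = Gmap hn Y := by
  haveI : NeZero n := ⟨by omega⟩
  haveI : NeZero (n - 1) := ⟨by omega⟩
  have hform0 := hY.2.2.2.1
  rw [monoPoset_mem_iff (by omega : 1 ≤ m)] at hY
  obtain ⟨hne, hfin, hcard, hform, hinj⟩ := hY
  have hGfin : (Gmap hn Y).Finite := ((hfin.image _).union ((hfin.image _).image _))
  have key : ∀ (α β : ℂ) (j : Fin (n - 1)), α ≠ 0 → β ≠ 0 →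
      α • (Pi.single j 1 : Fin (n - 1) → ℂ) ∈ Y →
      β • (Pi.single j 1 : Fin (n - 1) → ℂ) ∈ Y → α = β := by
    intro α β j hα hβ h1 h2
    have heq := hinj h1 h2 (by rw [idx_smul_single hα, idx_smul_single hβ])
    have := congrFun heq j
    rw [smul_single_apply, smul_single_apply, if_pos rfl, if_pos rfl] at this
    exact this
  constructor
  · rw [monoPoset_mem_iff (by omega : 1 ≤ m)]
    refine ⟨?_, hGfin, ?_, ?_, ?_⟩
    · obtain ⟨w, hw⟩ := hne
      exact ⟨emap hn w, mem_union_left _ (mem_image_of_mem _ hw)⟩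
    · -- cardinality
      have hsub : Gmap hn Y ⊆ emap hn '' Y ∪ (Gmap hn Y ∩ Lset hn) := by
        intro u hu
        rcases Gmap_cases hm hn hform0 hu with ⟨α, j, hα, hmem, hueq⟩ | ⟨α, hα, hmem, hueq⟩
        · exact Or.inl ⟨α • (Pi.single j 1 : Fin (n - 1) → ℂ), hmem,
            by rw [emap_smul_single, hueq]⟩
        · exact Or.inr ⟨hu, α, hueq⟩
      have hss : (Gmap hn Y ∩ Lset hn).Subsingleton := by
        intro u1 h1 u2 h2
        rcases Gmap_cases hm hn hform0 h1.1 with ⟨α, j, hα, hmem, hueq⟩ | ⟨α1, hα1, hm1, he1⟩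
        · exact absurd (hueq ▸ h1.2)
            (not_mem_Lset hn (root_ne_zero (by omega) hα) (castLE_ne_idxB hn j))
        rcases Gmap_cases hm hn hform0 h2.1 with ⟨α, j, hα, hmem, hueq⟩ | ⟨α2, hα2, hm2, he2⟩
        · exact absurd (hueq ▸ h2.2)
            (not_mem_Lset hn (root_ne_zero (by omega) hα) (castLE_ne_idxB hn j))
        have : α1 = α2 := key α1 α2 _ (root_ne_zero (by omega) hα1)
          (root_ne_zero (by omega) hα2) hm1 hm2
        rw [he1, he2, this]
      have h1 : (Gmap hn Y).ncard ≤ (emap hn '' Y ∪ (Gmap hn Y ∩ Lset hn)).ncard :=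
        Set.ncard_le_ncard hsub ((hfin.image _).union (hGfin.subset inter_subset_left))
      have h2 : (emap hn '' Y ∪ (Gmap hn Y ∩ Lset hn)).ncard ≤
          (emap hn '' Y).ncard + (Gmap hn Y ∩ Lset hn).ncard := Set.ncard_union_le _ _
      have h3 : (emap hn '' Y).ncard ≤ Y.ncard := Set.ncard_image_le hfin
      have h4 : (Gmap hn Y ∩ Lset hn).ncard ≤ 1 :=
        (Set.ncard_le_one (hGfin.subset inter_subset_left)).mpr hss
      omega
    · -- form
      intro u hu
      rcases Gmap_cases hm hn hform0 hu with ⟨α, j, hα, hmem, hueq⟩ | ⟨α, hα, hmem, hueq⟩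
      · exact ⟨α, _, hα, hueq⟩
      · exact ⟨α, _, hα, hueq⟩
    · -- injectivity
      intro u1 h1 u2 h2 hid
      rcases Gmap_cases hm hn hform0 h1 with ⟨α1, j1, hα1, hm1, he1⟩ | ⟨α1, hα1, hm1, he1⟩ <;>
        rcases Gmap_cases hm hn hform0 h2 with ⟨α2, j2, hα2, hm2, he2⟩ | ⟨α2, hα2, hm2, he2⟩
      · rw [he1, he2, idx_smul_single (root_ne_zero (by omega) hα1),
          idx_smul_single (root_ne_zero (by omega) hα2)] at hid
        have hj : j1 = j2 := Fin.castLE_injective _ hid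
        subst hj
        have : α1 = α2 := key α1 α2 _ (root_ne_zero (by omega) hα1)
          (root_ne_zero (by omega) hα2) hm1 hm2
        rw [he1, he2, this]
      · rw [he1, he2, idx_smul_single (root_ne_zero (by omega) hα1),
          idx_smul_single (root_ne_zero (by omega) hα2)] at hid
        exact absurd hid (castLE_ne_idxB hn j1)
      · rw [he1, he2, idx_smul_single (root_ne_zero (by omega) hα1),
          idx_smul_single (root_ne_zero (by omega) hα2)] at hid
        exact absurd hid.symm (castLE_ne_idxB hn j2)
      · have : α1 = α2 := key α1 α2 _ (root_ne_zero (by omega) hα1)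
          (root_ne_zero (by omega) hα2) hm1 hm2
        rw [he1, he2, this]
  · -- fixedness
    show tmap hn '' (emap hn '' Y ∪ tmap hn '' (emap hn '' Y)) = _
    have h2 : tmap hn '' (tmap hn '' (emap hn '' Y)) = emap hn '' Y := by
      rw [← image_comp]
      have hid : tmap hn ∘ tmap hn = id := funext (tmap_tmap hn)
      rw [hid, image_id]
    rw [image_union, h2, union_comm]
    rfl

end Main

section Inverse

variable {m n : ℕ}

lemma emap_rmap (hn : 2 ≤ n) {m : ℕ} (hm : 2 ≤ m) {X : Set (Fin n → ℂ)}
    (hform : ∀ v ∈ X, ∃ (α : ℂ) (i : Fin n), α ^ m = 1 ∧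
      v = α • (Pi.single i 1 : Fin n → ℂ))
    {v : Fin n → ℂ} (hv : v ∈ X \ Lset hn) : emap hn (rmap hn v) = v := by
  obtain ⟨α, i, hα, hvi⟩ := hform v hv.1
  have hα0 := root_ne_zero (by omega : 1 ≤ m) hα
  have hib : i ≠ idxB hn := by rintro rfl; exact hv.2 ⟨α, hvi⟩
  have hlt : (i : ℕ) < n - 1 := by
    have h1 := i.isLt
    have h2 : (i : ℕ) ≠ n - 1 := fun h => hib (Fin.ext h)
    omega
  rw [hvi, rmap_smul_single hn α i hlt, emap_smul_single]
  have hcast : Fin.castLE (by omega : n - 1 ≤ n) (⟨(i : ℕ), hlt⟩ : Fin (n - 1)) = i :=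
    Fin.ext rfl
  rw [hcast]

lemma Gmap_Fmap (hm : 2 ≤ m) (hn : 2 ≤ n) {X : Set (Fin n → ℂ)}
    (hX : X ∈ monoPoset m n) (hfix : tmap hn '' X = X) : Gmap hn (Fmap hn X) = X := by
  haveI : NeZero n := ⟨by omega⟩
  have hform := hX.2.2.2.1
  apply Set.Subset.antisymm
  · rintro u (⟨y, ⟨v, hv, rfl⟩, rfl⟩ | ⟨u', ⟨y, ⟨v, hv, rfl⟩, rfl⟩, rfl⟩)
    · rw [emap_rmap hn hm hform hv]; exact hv.1
    · rw [emap_rmap hn hm hform hv]; exact fixed_mem hn hfix hv.1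
  · intro v hv
    obtain ⟨α, i, hα, hvi⟩ := hform v hv
    have hα0 := root_ne_zero (by omega : 1 ≤ m) hα
    by_cases hib : i = idxB hn
    · -- v is on the last axis; use t
      have hwX : tmap hn v ∈ X := fixed_mem hn hfix hv
      have hweq : tmap hn v = α • (Pi.single (idxA hn) 1 : Fin n → ℂ) := by
        rw [hvi, hib, tmap_smul_single, Equiv.swap_apply_right]
      have hwL : tmap hn v ∉ Lset hn := by
        rw [hweq]; exact not_mem_Lset hn hα0 (idxA_ne_idxB hn)
      refine Or.inr ⟨emap hn (rmap hn (tmap hn v)),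
        ⟨rmap hn (tmap hn v), ⟨tmap hn v, ⟨hwX, hwL⟩, rfl⟩, rfl⟩, ?_⟩
      rw [emap_rmap hn hm hform ⟨hwX, hwL⟩, tmap_tmap]
    · have hvL : v ∉ Lset hn := by rw [hvi]; exact not_mem_Lset hn hα0 hib
      exact Or.inl ⟨rmap hn v, ⟨v, ⟨hv, hvL⟩, rfl⟩, emap_rmap hn hm hform ⟨hv, hvL⟩⟩

lemma Fmap_Gmap (hm : 2 ≤ m) (hn : 2 ≤ n) {Y : Set (Fin (n - 1) → ℂ)}
    (hY : Y ∈ monoPoset m (n - 1)) : Fmap hn (Gmap hn Y) = Y := by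
  have hform0 := hY.2.2.2.1
  apply Set.Subset.antisymm
  · rintro y ⟨u, ⟨huG, huL⟩, rfl⟩
    rcases Gmap_cases hm hn hform0 huG with ⟨α, j, hα, hmem, hueq⟩ | ⟨α, hα, hmem, hueq⟩
    · have : u = emap hn (α • (Pi.single j 1 : Fin (n - 1) → ℂ)) := by
        rw [emap_smul_single, hueq]
      rw [this, rmap_emap]
      exact hmem
    · exact absurd (hueq ▸ huL) (fun h => h ⟨α, rfl⟩)
  · intro w hw
    obtain ⟨α, j, hα, hwj⟩ := hform0 w hw
    have hα0 := root_ne_zero (by omega : 1 ≤ m) hα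
    refine ⟨emap hn w, ⟨Or.inl (mem_image_of_mem _ hw), ?_⟩, rmap_emap hn w⟩
    rw [hwj, emap_smul_single]
    exact not_mem_Lset hn hα0 (castLE_ne_idxB hn j)

end Inverse

theorem stmt_7 (m n : ℕ) (hm : 2 ≤ m) (hn : 2 ≤ n) :
    ∃ φ : {X : Set (Fin n → ℂ) // X ∈ monoPoset m n ∧
            (fun v : Fin n → ℂ =>
              v ∘ Equiv.swap (⟨n - 2, by omega⟩ : Fin n) (⟨n - 1, by omega⟩ : Fin n)) '' X = X}
          ≃o {Y : Set (Fin (n - 1) → ℂ) // Y ∈ monoPoset m (n - 1)},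
      ∀ X, ((φ X : Set (Fin (n - 1) → ℂ))) =
        (fun v : Fin n → ℂ => v ∘ Fin.castLE (by omega : n - 1 ≤ n)) ''
          ((X : Set (Fin n → ℂ)) \
            {w | ∃ c : ℂ, w = c • (Pi.single (⟨n - 1, by omega⟩ : Fin n) 1 : Fin n → ℂ)}) := by
  have hfix_eq : ∀ X : Set (Fin n → ℂ),
      ((fun v : Fin n → ℂ =>
        v ∘ Equiv.swap (⟨n - 2, by omega⟩ : Fin n) (⟨n - 1, by omega⟩ : Fin n)) '' X = X)
      = (tmap hn '' X = X) := fun X => rfl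
  refine ⟨{ toFun := fun X => ⟨Fmap hn X.1, Fmap_mem hm hn X.2.1 X.2.2⟩
            invFun := fun Y => ⟨Gmap hn Y.1, (Gmap_mem hm hn Y.2).1, (Gmap_mem hm hn Y.2).2⟩
            left_inv := fun X => Subtype.ext (Gmap_Fmap hm hn X.2.1 X.2.2)
            right_inv := fun Y => Subtype.ext (Fmap_Gmap hm hn Y.2)
            map_rel_iff' := ?_ }, fun X => rfl⟩
  intro X X'
  constructor
  · intro h
    have h' : Fmap hn X.1 ⊆ Fmap hn X'.1 := h
    have h2 : Gmap hn (Fmap hn X.1) ⊆ Gmap hn (Fmap hn X'.1) := Gmap_mono hn h'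
    rw [Gmap_Fmap hm hn X.2.1 X.2.2, Gmap_Fmap hm hn X'.2.1 X'.2.2] at h2
    exact h2
  · intro h
    show Fmap hn X.1 ⊆ Fmap hn X'.1
    exact image_mono (diff_subset_diff_left h)
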